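/- For every ℂ-linear subspace V of ℂⁿ there exists a subfield k₀ of ℂ such that V is defined over k₀, and k₀ is contained in every subfield k of ℂ over which V is defined. In other words, the field of definition of a subspace of ℂⁿ is well-defined: there is a unique smallest subfield of ℂ over which V is defined. -/

import Mathlib

set_option synthInstance.maxHeartbeats 1000000
set_option maxHeartbeats 1000000

open Module Submodule

namespace FieldOfDefAux

variable {n : ℕ}

/-- The set of "pivot" coordinates of a subspace `V ⊆ ℂⁿ`: those `j` such that some
vector of `V` has its first nonzero coordinate at `j`. -/
def pivots (V : Submodule ℂ (Fin n → ℂ)) : Set (Fin n) :=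
  {j | ∃ v ∈ V, v j ≠ 0 ∧ ∀ i, i < j → v i = 0}

noncomputable instance (V : Submodule ℂ (Fin n → ℂ)) : Fintype (pivots V) :=
  (Set.toFinite _).fintype

lemma eq_zero_of_vanish {V : Submodule ℂ (Fin n → ℂ)} {v : Fin n → ℂ} (hv : v ∈ V)
    (h : ∀ j ∈ pivots V, v j = 0) : v = 0 := by
  classical
  by_contra hne
  have hex : ∃ i, v i ≠ 0 := by
    by_contra hc; push_neg at hc; exact hne (funext fun i => hc i)
  obtain ⟨i0, hi0⟩ := hex
  obtain ⟨j, hj, hmin⟩ := Finset.exists_min_image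
    (Finset.univ.filter fun i => v i ≠ 0) id ⟨i0, by simp [hi0]⟩
  simp only [Finset.mem_filter, Finset.mem_univ, true_and] at hj
  have hjp : j ∈ pivots V := by
    refine ⟨v, hv, hj, fun i hij => ?_⟩
    by_contra hvi
    exact absurd (hmin i (by simp [hvi])) (by simpa using hij.not_ge)
  exact hj (h j hjp)

/-- Restriction of a vector of `V` to the pivot coordinates. -/
noncomputable def rmap (V : Submodule ℂ (Fin n → ℂ)) : V →ₗ[ℂ] (pivots V → ℂ) where
  toFun v := fun j => v.1 j.1
  map_add' _ _ := rfl
  map_smul' _ _ := rfl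

lemma rmap_injective (V : Submodule ℂ (Fin n → ℂ)) : Function.Injective (rmap V) := by
  intro a b hab
  apply Subtype.ext
  have h0 : (a : Fin n → ℂ) - b = 0 := by
    apply eq_zero_of_vanish (V.sub_mem a.2 b.2)
    intro j hj
    have := congrFun hab ⟨j, hj⟩
    simp only [rmap, LinearMap.coe_mk, AddHom.coe_mk] at this
    simp [this]
  exact sub_eq_zero.mp h0

lemma exists_pivot_vec (V : Submodule ℂ (Fin n → ℂ)) (j : pivots V) :
    ∃ w, w ∈ V ∧ w j.1 = 1 ∧ ∀ i, i < j.1 → w i = 0 := by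
  obtain ⟨v, hv, hvj, hlt⟩ := j.2
  exact ⟨(v j.1)⁻¹ • v, V.smul_mem _ hv, by simp [inv_mul_cancel₀ hvj],
    fun i hi => by simp [hlt i hi]⟩

lemma finrank_eq (V : Submodule ℂ (Fin n → ℂ)) :
    finrank ℂ V = Fintype.card (pivots V) := by
  classical
  refine le_antisymm ?_ ?_
  · exact (LinearMap.finrank_le_finrank_of_injective (rmap_injective V)).trans
      (le_of_eq (Module.finrank_pi ℂ))
  · choose w hwV hw1 hw0 using exists_pivot_vec V
    have hli : LinearIndependent ℂ (fun j : pivots V => (⟨w j, hwV j⟩ : V)) := by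
      apply LinearIndependent.of_comp V.subtype
      rw [linearIndependent_iff']
      intro s g hsum
      by_contra hc
      push_neg at hc
      obtain ⟨i0, hi0s, hi0⟩ := hc
      obtain ⟨j, hj, hmin⟩ := Finset.exists_min_image
        (s.filter fun i => g i ≠ 0) id ⟨i0, by simp [hi0s, hi0]⟩
      simp only [Finset.mem_filter] at hj
      have hsum' := congrFun hsum j.1
      rw [Finset.sum_apply] at hsum'
      rw [Finset.sum_eq_single j (fun i his hne => ?_) (fun h => absurd hj.1 h)] at hsum'
      · simp only [Pi.smul_apply, Function.comp_apply, smul_eq_mul, Pi.zero_apply,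
          Submodule.subtype_apply, hw1 j, mul_one] at hsum'
        exact hj.2 hsum'
      · rcases eq_or_ne (g i) 0 with h0 | h0
        · simp [h0]
        · have hji : j ≤ i := hmin i (by simp [his, h0])
          have hlt : j.1 < i.1 := Subtype.coe_lt_coe.mpr (lt_of_le_of_ne hji (Ne.symm hne))
          have hw : w i j.1 = 0 := hw0 i j.1 hlt
          simp [Function.comp_apply, Submodule.subtype_apply, hw]
    simpa using hli.fintype_card_le_finrank

/-- `rmap` as a linear equivalence. -/
noncomputable def requiv (V : Submodule ℂ (Fin n → ℂ)) : V ≃ₗ[ℂ] (pivots V → ℂ) :=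
  LinearMap.linearEquivOfInjective (rmap V) (rmap_injective V)
    (by rw [finrank_eq, Module.finrank_pi])

lemma requiv_apply (V : Submodule ℂ (Fin n → ℂ)) (v : V) : requiv V v = rmap V v := rfl

/-- The canonical (reduced-echelon) basis vectors of `V`. -/
noncomputable def u (V : Submodule ℂ (Fin n → ℂ)) (j : pivots V) : Fin n → ℂ :=
  ((requiv V).symm (Pi.single (M := fun _ => ℂ) j 1) : V)

lemma u_mem (V : Submodule ℂ (Fin n → ℂ)) (j : pivots V) : u V j ∈ V :=
  ((requiv V).symm (Pi.single (M := fun _ => ℂ) j 1)).2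

lemma u_apply (V : Submodule ℂ (Fin n → ℂ)) (j j' : pivots V) :
    u V j j'.1 = Pi.single (M := fun _ => ℂ) j 1 j' := by
  have := (requiv V).apply_symm_apply (Pi.single (M := fun _ => ℂ) j 1)
  exact congrFun this j'

lemma u_unique (V : Submodule ℂ (Fin n → ℂ)) {v : Fin n → ℂ} (hv : v ∈ V) (j : pivots V)
    (h : ∀ j' : pivots V, v j'.1 = Pi.single (M := fun _ => ℂ) j 1 j') : v = u V j := by
  have : (⟨v, hv⟩ : V) = ⟨u V j, u_mem V j⟩ := by
    apply rmap_injective V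
    funext j'
    show v j'.1 = u V j j'.1
    rw [h j', u_apply]
  exact congrArg Subtype.val this

lemma span_u (V : Submodule ℂ (Fin n → ℂ)) :
    Submodule.span ℂ (Set.range (u V)) = V := by
  classical
  apply le_antisymm
  · rw [span_le]; rintro _ ⟨j, rfl⟩; exact u_mem V j
  · intro v hv
    have hrepr : v = ∑ j : pivots V, v j.1 • u V j := by
      have hd : v - ∑ j : pivots V, v j.1 • u V j = 0 := by
        apply eq_zero_of_vanish
          (V.sub_mem hv (sum_mem fun j _ => V.smul_mem _ (u_mem V j)))
        intro j hj
        simp only [Pi.sub_apply, Finset.sum_apply, Pi.smul_apply, smul_eq_mul]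
        have : ∀ j' : pivots V, v j'.1 * u V j' j = v j'.1 * Pi.single (M := fun _ => ℂ) j' 1 ⟨j, hj⟩ := by
          intro j'; rw [show u V j' j = u V j' (⟨j, hj⟩ : pivots V).1 from rfl, u_apply]
        rw [Finset.sum_congr rfl fun j' _ => this j']
        rw [Finset.sum_eq_single (⟨j, hj⟩ : pivots V)
          (fun i _ hne => by simp [Pi.single_apply, Ne.symm hne])
          (fun h => absurd (Finset.mem_univ _) h)]
        simp
      have := sub_eq_zero.mp hd
      exact this
    rw [hrepr]
    exact sum_mem fun j _ => smul_mem _ _ (subset_span ⟨j, rfl⟩)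

lemma u_coords_mem (V : Submodule ℂ (Fin n → ℂ)) (k : Subfield ℂ) (S : Set (Fin n → ℂ))
    (hSk : ∀ v ∈ S, ∀ i, v i ∈ k) (hspan : Submodule.span ℂ S = V) (j : pivots V) (i : Fin n) :
    u V j i ∈ k := by
  classical
  set φ : (Fin n → k) →ₗ[k] (Fin n → ℂ) :=
    { toFun := fun x i => (x i : ℂ)
      map_add' := by intro a b; funext i; push_cast; rfl
      map_smul' := by
        intro c x; funext i
        simp only [Pi.smul_apply, RingHom.id_apply, Subring.smul_def]
        push_cast; rfl } with hφ
  have hφapp : ∀ (x : Fin n → k) (i : Fin n), φ x i = (x i : ℂ) := fun _ _ => rfl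
  have hφinj : Function.Injective φ := by
    intro a b hab
    funext i'
    exact Subtype.ext (by rw [← hφapp a i', ← hφapp b i', hab])
  set S' : Set (Fin n → k) := φ ⁻¹' S with hS'
  set W : Submodule k (Fin n → k) := Submodule.span k S' with hW
  have hWmem : ∀ x ∈ W, φ x ∈ V := by
    intro x hx
    have hle : W ≤ (V.restrictScalars k).comap φ := by
      rw [hW, span_le]
      intro y hy
      rw [Set.mem_preimage] at hy
      exact (show φ y ∈ V from hspan ▸ subset_span hy)
    exact hle hx
  set r' : W →ₗ[k] (pivots V → k) :=
    { toFun := fun x j' => x.1 j'.1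
      map_add' := fun _ _ => rfl
      map_smul' := fun _ _ => rfl } with hr'
  have hr'inj : Function.Injective r' := by
    intro a b hab
    apply Subtype.ext
    apply hφinj
    have h0 : φ a.1 - φ b.1 = 0 := by
      apply eq_zero_of_vanish (V.sub_mem (hWmem _ a.2) (hWmem _ b.2))
      intro j' hj'
      have h1 : a.1 j' = b.1 j' := congrFun hab ⟨j', hj'⟩
      simp [hφapp, h1]
    exact sub_eq_zero.mp h0
  have hdim : finrank k W = Fintype.card (pivots V) := by
    refine le_antisymm ((LinearMap.finrank_le_finrank_of_injective hr'inj).trans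
      (le_of_eq (Module.finrank_pi k))) ?_
    rw [← finrank_eq]
    set d := finrank k W with hd
    set b := Module.finBasis k W with hb
    set g : Fin d → (Fin n → ℂ) := fun m => φ (b m).1 with hg
    have hVle : V ≤ Submodule.span ℂ (Set.range g) := by
      rw [← hspan, span_le]
      intro v hvS
      set x : Fin n → k := fun i' => ⟨v i', hSk v hvS i'⟩ with hx
      have hφx : φ x = v := funext fun i' => rfl
      have hxW : x ∈ W := subset_span (show φ x ∈ S by rw [hφx]; exact hvS)
      have hsum : ((⟨x, hxW⟩ : W) : Fin n → k)
          = ∑ m, b.repr ⟨x, hxW⟩ m • ((b m : W) : Fin n → k) := by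
        conv_lhs => rw [← b.sum_repr ⟨x, hxW⟩]
        push_cast
        rfl
      have : v = ∑ m, ((b.repr ⟨x, hxW⟩ m : k) : ℂ) • g m := by
        rw [← hφx]
        calc φ x = φ (∑ m, b.repr ⟨x, hxW⟩ m • ((b m : W) : Fin n → k)) := by rw [← hsum]
        _ = ∑ m, b.repr ⟨x, hxW⟩ m • φ ((b m : W) : Fin n → k) := by
              rw [map_sum]; exact Finset.sum_congr rfl fun m _ => by rw [map_smul]
        _ = ∑ m, ((b.repr ⟨x, hxW⟩ m : k) : ℂ) • g m := by
              exact Finset.sum_congr rfl fun m _ => by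
                rw [hg]; exact algebra_compatible_smul ℂ _ _
      rw [this]
      exact sum_mem fun m _ => smul_mem _ _ (subset_span ⟨m, rfl⟩)
    calc finrank ℂ V ≤ finrank ℂ (Submodule.span ℂ (Set.range g)) :=
          Submodule.finrank_mono hVle
      _ ≤ (Set.range g).toFinset.card := finrank_span_le_card _
      _ ≤ d := by
          rw [Set.toFinset_range]
          exact (Finset.card_image_le).trans (by simp)
  set e := LinearMap.linearEquivOfInjective r' hr'inj
    (by rw [hdim, Module.finrank_pi]) with he
  set x := e.symm (Pi.single (M := fun _ => k) j 1) with hxdef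
  have hx' : r' x = Pi.single (M := fun _ => k) j 1 := e.apply_symm_apply _
  have huj : φ x.1 = u V j := by
    apply u_unique V (hWmem _ x.2) j
    intro j'
    have h1 : x.1 j'.1 = Pi.single (M := fun _ => k) j 1 j' := congrFun hx' j'
    rw [hφapp, h1]
    rcases eq_or_ne j' j with rfl | hne
    · simp
    · simp [Pi.single_apply, hne]
  rw [← huj, hφapp]
  exact (x.1 i).2

end FieldOfDefAux


/-- Every ℂ-linear subspace `V` of `ℂⁿ` has a well-defined field of
definition: there is a smallest subfield `k₀` of `ℂ` such that `V` is spanned over `ℂ`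
by vectors all of whose coordinates lie in `k₀`. -/
theorem exists_smallest_field_of_definition (n : ℕ) (V : Submodule ℂ (Fin n → ℂ)) :
    ∃ k₀ : Subfield ℂ,
      (∃ S : Set (Fin n → ℂ), (∀ v ∈ S, ∀ j, v j ∈ k₀) ∧ Submodule.span ℂ S = V) ∧
      ∀ k : Subfield ℂ,
        (∃ S : Set (Fin n → ℂ), (∀ v ∈ S, ∀ j, v j ∈ k) ∧ Submodule.span ℂ S = V) →
        k₀ ≤ k := by
  classical
  refine ⟨Subfield.closure
      {c | ∃ (j : FieldOfDefAux.pivots V) (i : Fin n), FieldOfDefAux.u V j i = c},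
    ⟨Set.range (FieldOfDefAux.u V), ?_, FieldOfDefAux.span_u V⟩, ?_⟩
  · rintro v ⟨j, rfl⟩ i
    exact Subfield.subset_closure ⟨j, i, rfl⟩
  · rintro k ⟨S, hSk, hspan⟩
    apply Subfield.closure_le.mpr
    rintro c ⟨j, i, rfl⟩
    exact FieldOfDefAux.u_coords_mem V k S hSk hspan j i
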